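/- arXiv:2106.08666 — 2 statements merged into one kernel-verified Lean document; each statement's English description precedes it below -/
import Mathlib

section
/- Let (A,σ) be a symmetric quiver algebra and let M, N be two ε-representations on the same ε-quadratic space (V,⟨-,-⟩). Then M and N are isomorphic as ε-representations (i.e., conjugate under the graded isometry group) if and only if they are isomorphic as A-representations (i.e., conjugate under GL•(V)). -/
lemma newton_sqrt {R : Type*} [CommRing R] (h2 : IsUnit (2:R)) :
    ∀ k : ℕ, ∀ b d : R, IsUnit b → d ^ k = 0 → ∃ c : R, c ^ 2 = b ^ 2 + d := by
  intro k
  induction k using Nat.strong_induction_on with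
  | _ k ih =>
    intro b d hb hd
    match k, hd with
    | 0, hd =>
      have h1 : (1:R) = 0 := by simpa using hd
      refine ⟨0, ?_⟩
      rw [show b^2+d = (b^2+d)*1 from by ring, h1, mul_zero]
      simp
    | 1, hd =>
      refine ⟨b, ?_⟩
      rw [pow_one] at hd
      rw [hd, add_zero]
    | (n+2), hd =>
      set k := n + 2 with hk
      have hu : IsUnit ((2:R) * b) := h2.mul hb
      set e : R := ((hu.unit⁻¹ : Rˣ) : R) with hedef
      have he : e * (2 * b) = 1 := by
        have := hu.unit.inv_mul
        rwa [IsUnit.unit_spec] at this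
      set b' := b + d * e with hb'def
      set d' := -(d^2 * e^2) with hd'def
      have hnb' : IsUnit b' := by
        refine IsNilpotent.isUnit_add_left_of_commute ?_ hb (Commute.all _ _)
        exact (Commute.all d e).isNilpotent_mul_right ⟨k, hd⟩
      set m := (k+1)/2 with hm
      have hmk : m < k := by omega
      have h2m : d ^ (2*m) = 0 := by
        rw [show 2*m = k + (2*m - k) from by omega, pow_add, hd, zero_mul]
      have hd' : d' ^ m = 0 := by
        show (-(d^2 * e^2))^m = 0
        rw [show -(d^2*e^2) = d^2 * (-(e^2)) from by ring, mul_pow, ← pow_mul, h2m, zero_mul]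
      obtain ⟨c, hc⟩ := ih m hmk b' d' hnb' hd'
      refine ⟨c, ?_⟩
      rw [hc, hb'def, hd'def]
      linear_combination d * he

open Polynomial in
lemma exists_sqrt_poly {V : Type*} [AddCommGroup V] [Module ℂ V] [FiniteDimensional ℂ V]
    (T : Module.End ℂ V) (hT : Function.Bijective T) :
    ∃ q : ℂ[X], (aeval T q) * (aeval T q) = T := by
  have hTu : IsUnit T := (Module.End.isUnit_iff T).mpr hT
  have hint : IsIntegral ℂ T := LinearMap.isIntegral T
  set p := minpoly ℂ T with hpdef
  have hp0 : p ≠ 0 := minpoly.ne_zero hint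
  have hmonic : p.Monic := minpoly.monic hint
  have hpT : aeval T p = 0 := minpoly.aeval ℂ T
  -- zero is not a root of p
  have hzero : ¬ p.IsRoot 0 := by
    intro h0
    obtain ⟨r, hr⟩ : (X : ℂ[X]) ∣ p := by
      simpa using (dvd_iff_isRoot (p := p) (a := 0)).mpr h0
    have hr0 : r ≠ 0 := by rintro rfl; exact hp0 (by simpa using hr)
    have har : aeval T r = 0 := by
      have h := hpT
      rw [hr, map_mul, aeval_X] at h
      exact (hTu.mul_right_eq_zero).mp h
    have hdvd : p ∣ r := minpoly.dvd ℂ T har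
    have h1 : p.natDegree ≤ r.natDegree := natDegree_le_of_dvd hdvd hr0
    have h2 : r.natDegree < p.natDegree := by
      rw [hr, natDegree_X_mul hr0]; omega
    omega
  -- square roots in ℂ
  choose sq hsq using fun z : ℂ => IsAlgClosed.exists_pow_nat_eq z (n := 2) zero_lt_two
  set q₀ : ℂ[X] := Lagrange.interpolate p.roots.toFinset id sq with hq₀def
  have hq₀ : ∀ z ∈ p.roots, q₀.eval z = sq z := by
    intro z hz
    have := Lagrange.eval_interpolate_at_node (v := id) (r := sq)
      (Set.injOn_id _) (Multiset.mem_toFinset.mpr hz)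
    rw [hq₀def]; simpa using this
  have hrootne : ∀ z ∈ p.roots, z ≠ 0 := by
    intro z hz hz0
    rw [hz0] at hz
    exact hzero ((mem_roots hp0).mp hz)
  have hcop : IsCoprime q₀ p := by
    rw [Polynomial.isCoprime_iff_aeval_ne_zero_of_isAlgClosed (k := ℂ) (K := ℂ)]
    intro z
    by_cases hz : (aeval z) p = 0
    · left
      have hzr : z ∈ p.roots := by
        rw [mem_roots hp0]
        rwa [IsRoot, ← coe_aeval_eq_eval]
      rw [coe_aeval_eq_eval, hq₀ z hzr]
      intro h
      exact hrootne z hzr (by rw [← hsq z, h]; ring)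
    · right; exact hz
  -- work in the quotient ring
  set I : Ideal ℂ[X] := Ideal.span {p} with hIdef
  set mk : ℂ[X] →+* ℂ[X] ⧸ I := Ideal.Quotient.mk I with hmkdef
  have hmkp : mk p = 0 := by
    rw [hmkdef, Ideal.Quotient.eq_zero_iff_mem, hIdef]
    exact Ideal.mem_span_singleton_self p
  have hbu : IsUnit (mk q₀) := by
    obtain ⟨u, v, huv⟩ := hcop
    refine IsUnit.of_mul_eq_one (mk u) ?_
    have : mk (u * q₀ + v * p) = mk 1 := by rw [huv]
    rw [map_add, map_mul, map_mul, hmkp, mul_zero, add_zero, map_one] at this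
    rw [mul_comm]; exact this
  have h2u : IsUnit (2 : ℂ[X] ⧸ I) := by
    have : IsUnit (2 : ℂ[X]) := by
      rw [← map_ofNat (C : ℂ →+* ℂ[X]) 2, isUnit_C]
      norm_num
    have := this.map mk
    rwa [map_ofNat] at this
  -- nilpotency
  have hdvdpow : p ∣ (X - q₀ ^ 2) ^ p.natDegree := by
    have hsplit : Splits p := IsAlgClosed.splits p
    have hpeq : p = (p.roots.map fun z => X - C z).prod :=
      hsplit.eq_prod_roots_of_monic hmonic
    have key : ∀ m : Multiset ℂ, (∀ z ∈ m, z ∈ p.roots) →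
        (m.map fun z => X - C z).prod ∣ (X - q₀ ^ 2) ^ Multiset.card m := by
      intro m
      induction m using Multiset.induction_on with
      | empty => intro _; simp
      | cons z m ih =>
        intro hm
        rw [Multiset.map_cons, Multiset.prod_cons, Multiset.card_cons, pow_succ']
        refine mul_dvd_mul ?_ (ih fun w hw => hm w (Multiset.mem_cons_of_mem hw))
        rw [dvd_iff_isRoot]
        have hz := hm z (Multiset.mem_cons_self z m)
        simp [IsRoot, hq₀ z hz, hsq z]
    calc p = (p.roots.map fun z => X - C z).prod := hpeq
      _ ∣ (X - q₀ ^ 2) ^ Multiset.card p.roots := key p.roots fun _ h => h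
      _ ∣ (X - q₀ ^ 2) ^ p.natDegree := pow_dvd_pow _ (card_roots' p)
  have hd : (mk X - (mk q₀) ^ 2) ^ p.natDegree = 0 := by
    have : mk ((X - q₀ ^ 2) ^ p.natDegree) = 0 := by
      rw [hmkdef, Ideal.Quotient.eq_zero_iff_mem, hIdef, Ideal.mem_span_singleton]
      exact hdvdpow
    rw [← this, map_pow, map_sub, map_pow]
  obtain ⟨c, hc⟩ := newton_sqrt h2u p.natDegree (mk q₀) (mk X - (mk q₀) ^ 2) hbu hd
  obtain ⟨q, rfl⟩ := Ideal.Quotient.mk_surjective c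
  have hqX : mk (q ^ 2 - X) = 0 := by
    rw [map_sub, map_pow]
    rw [hc]; ring
  have hpdvd : p ∣ q ^ 2 - X := by
    rwa [hmkdef, Ideal.Quotient.eq_zero_iff_mem, hIdef, Ideal.mem_span_singleton] at hqX
  obtain ⟨w, hw⟩ := hpdvd
  have : aeval T (q ^ 2 - X) = 0 := by rw [hw, map_mul, hpT, zero_mul]
  rw [map_sub, map_pow, aeval_X, sub_eq_zero] at this
  refine ⟨q, ?_⟩
  conv_rhs => rw [← this]
  rw [pow_two]

/-!  **Statement 17.**  (Isoclasses of symmetric representations.)  Symmetric quiver setting: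
vertices `ι`, arrows `A`, `s t : A → ι`, anti-involution `(σv, σa)`.  An `ε`-quadratic space
is encoded by a nondegenerate bilinear form `B` on the total space `∀ i, M i`, pairing only
the components `(i, σv i)` and satisfying `B x y = ε * B y x`.  Two `ε`-representations
`f, g` on the same `ε`-quadratic space are isomorphic as `ε`-representations (an isomorphism
of representations which is additionally an isometry of `B`) if and only if they are
isomorphic as plain quiver representations. -/

theorem eps_reps_isomorphic_iff_isomorphic
    {ι A : Type} [Fintype ι] [Fintype A] [DecidableEq ι]
    (s t : A → ι) (σv : ι → ι) (σa : A → A)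
    (hσv : ∀ i, σv (σv i) = i) (hσa : ∀ a, σa (σa a) = a)
    (hs : ∀ a, s (σa a) = σv (t a)) (ht : ∀ a, t (σa a) = σv (s a))
    (M : ι → Type) [∀ i, AddCommGroup (M i)] [∀ i, Module ℂ (M i)]
    [∀ i, FiniteDimensional ℂ (M i)]
    (ε : ℂ) (hε : ε = 1 ∨ ε = -1)
    (B : (∀ i, M i) →ₗ[ℂ] (∀ i, M i) →ₗ[ℂ] ℂ)
    (hnondeg : ∀ x, (∀ y, B x y = 0) → x = 0)
    (hepsilon : ∀ x y, B x y = ε * B y x)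
    (hcompat : ∀ i j : ι, j ≠ σv i → ∀ (x : M i) (y : M j),
      B (Pi.single i x) (Pi.single j y) = 0)
    (f g : ∀ a : A, M (s a) →ₗ[ℂ] M (t a))
    (hfrep : ∀ a : A, ∀ (x : M (s a)) (y : M (s (σa a))),
      B (Pi.single (t a) (f a x)) (Pi.single (s (σa a)) y) +
        B (Pi.single (s a) x) (Pi.single (t (σa a)) (f (σa a) y)) = 0)
    (hgrep : ∀ a : A, ∀ (x : M (s a)) (y : M (s (σa a))),
      B (Pi.single (t a) (g a x)) (Pi.single (s (σa a)) y) +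
        B (Pi.single (s a) x) (Pi.single (t (σa a)) (g (σa a) y)) = 0) :
    (∃ θ : ∀ i, M i ≃ₗ[ℂ] M i,
        ∀ a : A, ∀ x : M (s a), θ (t a) (f a x) = g a (θ (s a) x)) ↔
    (∃ θ : ∀ i, M i ≃ₗ[ℂ] M i,
        (∀ a : A, ∀ x : M (s a), θ (t a) (f a x) = g a (θ (s a) x)) ∧
        (∀ x y : ∀ i, M i, B (fun i => θ i (x i)) (fun i => θ i (y i)) = B x y)) := by
  constructor
  · rintro ⟨θ, hθ⟩
    classical
    have hinjσ : Function.Injective σv := Function.LeftInverse.injective hσv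
    set Θ : ((i : ι) → M i) ≃ₗ[ℂ] ((i : ι) → M i) := LinearEquiv.piCongrRight θ with hΘdef
    have hΘap : ∀ (u : ∀ i, M i) (i : ι), Θ u i = θ i (u i) := fun u i => rfl
    have hΘs : ∀ (i : ι) (x : M i), Θ (Pi.single i x) = Pi.single i (θ i x) := by
      intro i x
      funext j
      rcases eq_or_ne j i with rfl | hji
      · rw [hΘap, Pi.single_eq_same, Pi.single_eq_same]
      · rw [hΘap, Pi.single_eq_of_ne hji, Pi.single_eq_of_ne hji, map_zero]
    have hsum : ∀ x : ∀ i, M i, ∑ i, Pi.single i (x i) = x := fun x => Finset.univ_sum_single x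
    have hnd : ∀ (i : ι) (z : M i), (∀ y, B (Pi.single i z) y = 0) → z = 0 := by
      intro i z h
      have h0 : Pi.single i z = 0 := hnondeg _ h
      have := congrFun h0 i
      rwa [Pi.single_eq_same] at this
    -- construction of T
    have hdual : Module.finrank ℂ (∀ i, M i) =
        Module.finrank ℂ (Module.Dual ℂ (∀ i, M i)) := (Subspace.dual_finrank_eq).symm
    have hΦinj : Function.Injective (B : (∀ i, M i) →ₗ[ℂ] Module.Dual ℂ (∀ i, M i)) := by
      rw [← LinearMap.ker_eq_bot, LinearMap.ker_eq_bot']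
      intro x hx
      exact hnondeg x fun y => by simpa using LinearMap.congr_fun hx y
    have hΦbij : Function.Bijective (B : (∀ i, M i) →ₗ[ℂ] Module.Dual ℂ (∀ i, M i)) :=
      ⟨hΦinj, (LinearMap.injective_iff_surjective_of_finrank_eq_finrank hdual).mp hΦinj⟩
    set Φe : ((i : ι) → M i) ≃ₗ[ℂ] Module.Dual ℂ (∀ i, M i) :=
      LinearEquiv.ofBijective _ hΦbij with hΦedef
    set B' : ((i : ι) → M i) →ₗ[ℂ] ((i : ι) → M i) →ₗ[ℂ] ℂ :=
      B.compl₁₂ Θ.toLinearMap Θ.toLinearMap with hB'def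
    set T : Module.End ℂ (∀ i, M i) := Φe.symm.toLinearMap ∘ₗ B' with hTdef
    have key : ∀ x y, B (T x) y = B (Θ x) (Θ y) := by
      intro x y
      have h1 : (B : _ →ₗ[ℂ] Module.Dual ℂ (∀ i, M i)) (T x) = B' x := by
        show Φe (Φe.symm (B' x)) = B' x
        exact Φe.apply_symm_apply _
      have := LinearMap.congr_fun h1 y
      rw [LinearMap.compl₁₂_apply] at this
      exact this
    -- T is diagonal
    set τ : ∀ i, Module.End ℂ (M i) :=
      fun i => (LinearMap.proj i) ∘ₗ (T ∘ₗ LinearMap.single ℂ M i) with hτdef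
    have hτap : ∀ (i : ι) (x : M i), τ i x = T (Pi.single i x) i := fun i x => rfl
    have hTs : ∀ (i : ι) (x : M i), T (Pi.single i x) = Pi.single i (τ i x) := by
      intro i x
      funext j
      rcases eq_or_ne j i with rfl | hji
      · rw [Pi.single_eq_same, hτap]
      · rw [Pi.single_eq_of_ne hji]
        refine hnd j _ fun y => ?_
        conv_lhs => rw [← hsum y, map_sum]
        refine Finset.sum_eq_zero fun k _ => ?_
        rcases eq_or_ne k (σv j) with rfl | hk
        · -- pair against the partner component
          set w := y (σv j)
          have hdec : B (T (Pi.single i x)) (Pi.single (σv j) w) =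
              ∑ j', B (Pi.single j' (T (Pi.single i x) j')) (Pi.single (σv j) w) := by
            conv_lhs => rw [← hsum (T (Pi.single i x))]
            rw [map_sum, LinearMap.sum_apply]
          have hzero : B (T (Pi.single i x)) (Pi.single (σv j) w) = 0 := by
            rw [key, hΘs, hΘs]
            exact hcompat i (σv j) (fun h => hji (hinjσ h.symm).symm) _ _
          have hothers : ∀ j' ∈ Finset.univ, j' ≠ j →
              B (Pi.single j' (T (Pi.single i x) j')) (Pi.single (σv j) w) = 0 := by
            intro j' _ hj'
            exact hcompat j' (σv j) (fun h => hj' (hinjσ h).symm) _ _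
          have := (Finset.sum_eq_single_of_mem j (Finset.mem_univ j) hothers).symm.trans
            (hdec.symm.trans hzero)
          exact this
        · exact hcompat j k hk _ _
    -- T is self-adjoint
    have hε2 : ε * ε = 1 := by rcases hε with h | h <;> rw [h] <;> ring
    have hTadj : ∀ x y, B (T x) y = B x (T y) := by
      intro x y
      rw [key, hepsilon x (T y), key, hepsilon (Θ y) (Θ x), ← mul_assoc, hε2, one_mul]
    -- T is bijective
    have hTinj : Function.Injective T := by
      rw [← LinearMap.ker_eq_bot, LinearMap.ker_eq_bot']
      intro x hx
      have h1 : ∀ y, B (Θ x) (Θ y) = 0 := by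
        intro y
        rw [← key, hx, map_zero, LinearMap.zero_apply]
      have h2 : Θ x = 0 := hnondeg _ fun z => by
        have := h1 (Θ.symm z); rwa [Θ.apply_symm_apply] at this
      have := congrArg Θ.symm h2
      rwa [Θ.symm_apply_apply, map_zero] at this
    have hTbij : Function.Bijective T := ⟨hTinj, LinearMap.injective_iff_surjective.mp hTinj⟩
    -- square root
    obtain ⟨q, hq⟩ := exists_sqrt_poly T hTbij
    set S : Module.End ℂ (∀ i, M i) := Polynomial.aeval T q with hSdef
    have hmulcomm : ∀ r : Polynomial ℂ, T * Polynomial.aeval T r = Polynomial.aeval T r * T := by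
      intro r
      have e1 : T * Polynomial.aeval T r = Polynomial.aeval T (Polynomial.X * r) := by
        rw [map_mul, Polynomial.aeval_X]
      have e2 : Polynomial.aeval T r * T = Polynomial.aeval T (r * Polynomial.X) := by
        rw [map_mul, Polynomial.aeval_X]
      rw [e1, e2, mul_comm Polynomial.X r]
    have hTcomm : ∀ (r : Polynomial ℂ) z,
        T ((Polynomial.aeval T r) z) = (Polynomial.aeval T r) (T z) := by
      intro r z
      calc T ((Polynomial.aeval T r) z) = (T * Polynomial.aeval T r) z := rfl
        _ = (Polynomial.aeval T r * T) z := by rw [hmulcomm r]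
        _ = (Polynomial.aeval T r) (T z) := rfl
    -- polynomial lemmas by induction
    have hpolydiag : ∀ (r : Polynomial ℂ) (i : ι) (x : M i),
        (Polynomial.aeval T r) (Pi.single i x) = Pi.single i ((Polynomial.aeval (τ i) r) x) := by
      intro r
      induction r using Polynomial.induction_on with
      | C c =>
        intro i x
        simp [Polynomial.aeval_C, Module.algebraMap_end_apply, Pi.single_smul]
      | add p q hp hq =>
        intro i x
        simp only [map_add, LinearMap.add_apply, hp, hq]
        rw [← Pi.single_add]
      | monomial n c ih =>
        intro i x
        have e1 : (Polynomial.aeval T) (Polynomial.C c * Polynomial.X ^ (n + 1))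
            = (Polynomial.aeval T) (Polynomial.C c * Polynomial.X ^ n) * T := by
          rw [pow_succ, ← mul_assoc, map_mul, Polynomial.aeval_X]
        have e2 : (Polynomial.aeval (τ i)) (Polynomial.C c * Polynomial.X ^ (n + 1))
            = (Polynomial.aeval (τ i)) (Polynomial.C c * Polynomial.X ^ n) * (τ i) := by
          rw [pow_succ, ← mul_assoc, map_mul, Polynomial.aeval_X]
        rw [e1, e2, Module.End.mul_apply, Module.End.mul_apply, hTs, ih]
    have hpolyadj : ∀ (r : Polynomial ℂ) x y,
        B ((Polynomial.aeval T r) x) y = B x ((Polynomial.aeval T r) y) := by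
      intro r
      induction r using Polynomial.induction_on with
      | C c =>
        intro x y
        simp [Polynomial.aeval_C, Module.algebraMap_end_apply, map_smul]
      | add p q hp hq =>
        intro x y
        simp only [map_add, LinearMap.add_apply, map_add]
        rw [hp, hq]
      | monomial n c ih =>
        intro x y
        have e1 : (Polynomial.aeval T) (Polynomial.C c * Polynomial.X ^ (n + 1))
            = (Polynomial.aeval T) (Polynomial.C c * Polynomial.X ^ n) * T := by
          rw [pow_succ, ← mul_assoc, map_mul, Polynomial.aeval_X]
        rw [e1, Module.End.mul_apply, Module.End.mul_apply, ih, hTadj, hTcomm]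
    -- T intertwines f
    have hTf : ∀ (a : A) (x : M (s a)), τ (t a) (f a x) = f a (τ (s a) x) := by
      intro a x
      have hz : τ (t a) (f a x) - f a (τ (s a) x) = 0 := by
        refine hnd (t a) _ fun y => ?_
        conv_lhs => rw [← hsum y, map_sum]
        refine Finset.sum_eq_zero fun k _ => ?_
        rcases eq_or_ne k (s (σa a)) with rfl | hk
        · set w := y (s (σa a)) with hwdef
          have h1 : B (Pi.single (t a) (τ (t a) (f a x))) (Pi.single (s (σa a)) w)
              = - B (Pi.single (s a) (τ (s a) x)) (Pi.single (t (σa a)) (f (σa a) w)) := by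
            rw [← hTs, key, hΘs, hΘs, hθ a]
            have h2 := hgrep a (θ (s a) x) (θ (s (σa a)) w)
            have h3 : g (σa a) (θ (s (σa a)) w) = θ (t (σa a)) (f (σa a) w) := (hθ (σa a) w).symm
            rw [h3] at h2
            have h4 : B (Pi.single (t a) (g a (θ (s a) x))) (Pi.single (s (σa a)) (θ (s (σa a)) w))
                = - B (Pi.single (s a) (θ (s a) x))
                    (Pi.single (t (σa a)) (θ (t (σa a)) (f (σa a) w))) := by
              linear_combination h2
            rw [h4, ← hΘs, ← hΘs, ← key, hTs]
          have h5 : B (Pi.single (t a) (f a (τ (s a) x))) (Pi.single (s (σa a)) w)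
              = - B (Pi.single (s a) (τ (s a) x)) (Pi.single (t (σa a)) (f (σa a) w)) := by
            linear_combination hfrep a (τ (s a) x) w
          rw [Pi.single_sub, map_sub, LinearMap.sub_apply, h1, h5]
          ring
        · refine hcompat (t a) k ?_ _ _
          rw [← hs a]
          exact hk
      exact sub_eq_zero.mp hz
    -- aeval (τ i) intertwines f
    have hpolyf : ∀ (r : Polynomial ℂ) (a : A) (x : M (s a)),
        (Polynomial.aeval (τ (t a)) r) (f a x) = f a ((Polynomial.aeval (τ (s a)) r) x) := by
      intro r
      induction r using Polynomial.induction_on with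
      | C c =>
        intro a x
        simp [Polynomial.aeval_C, Module.algebraMap_end_apply, map_smul]
      | add p q hp hq =>
        intro a x
        simp only [map_add, LinearMap.add_apply, hp, hq]
      | monomial n c ih =>
        intro a x
        have e1 : (Polynomial.aeval (τ (t a))) (Polynomial.C c * Polynomial.X ^ (n + 1))
            = (Polynomial.aeval (τ (t a))) (Polynomial.C c * Polynomial.X ^ n) * (τ (t a)) := by
          rw [pow_succ, ← mul_assoc, map_mul, Polynomial.aeval_X]
        have e2 : (Polynomial.aeval (τ (s a))) (Polynomial.C c * Polynomial.X ^ (n + 1))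
            = (Polynomial.aeval (τ (s a))) (Polynomial.C c * Polynomial.X ^ n) * (τ (s a)) := by
          rw [pow_succ, ← mul_assoc, map_mul, Polynomial.aeval_X]
        rw [e1, e2, Module.End.mul_apply, Module.End.mul_apply, hTf, ih]
    -- S is bijective and diagonal
    have hSinj : Function.Injective S := by
      rw [← LinearMap.ker_eq_bot, LinearMap.ker_eq_bot']
      intro z hz
      have hTz : T z = 0 := by
        have h0 : (S * S) z = S (S z) := rfl
        rw [← hq, h0, hz, map_zero]
      exact hTinj (by rw [hTz, map_zero])
    have hcompbij : ∀ i : ι, Function.Bijective (Polynomial.aeval (τ i) q) := by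
      intro i
      have hinj : Function.Injective (Polynomial.aeval (τ i) q) := by
        rw [← LinearMap.ker_eq_bot, LinearMap.ker_eq_bot']
        intro z hz
        have h1 : S (Pi.single i z) = 0 := by
          rw [hSdef, hpolydiag, hz, Pi.single_zero]
        have h2 : Pi.single i z = (0 : ∀ i, M i) := hSinj (by rw [h1, map_zero])
        have h3 := congrFun h2 i
        rwa [Pi.single_eq_same] at h3
      exact ⟨hinj, LinearMap.injective_iff_surjective.mp hinj⟩
    set σe : ∀ i, M i ≃ₗ[ℂ] M i :=
      fun i => LinearEquiv.ofBijective _ (hcompbij i) with hσedef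
    have hσeap : ∀ (i : ι) (z : M i), σe i z = (Polynomial.aeval (τ i) q) z := fun i z => rfl
    refine ⟨fun i => (σe i).symm.trans (θ i), ?_, ?_⟩
    · intro a x
      show θ (t a) ((σe (t a)).symm (f a x)) = g a (θ (s a) ((σe (s a)).symm x))
      have h1 : (σe (t a)).symm (f a x) = f a ((σe (s a)).symm x) := by
        apply (σe (t a)).injective
        rw [(σe (t a)).apply_symm_apply, hσeap, hpolyf q a, ← hσeap, (σe (s a)).apply_symm_apply]
      rw [h1, hθ a]
    · intro x y
      set u : ∀ i, M i := fun i => (σe i).symm (x i) with hudef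
      set v : ∀ i, M i := fun i => (σe i).symm (y i) with hvdef
      have hSu : S u = x := by
        conv_lhs => rw [← hsum u, map_sum]
        have h1 : ∀ i, S (Pi.single i (u i)) = Pi.single i (x i) := by
          intro i
          rw [hSdef, hpolydiag]
          exact congrArg (Pi.single i) ((σe i).apply_symm_apply (x i))
        rw [Finset.sum_congr rfl fun i _ => h1 i, hsum]
      have hSv : S v = y := by
        conv_lhs => rw [← hsum v, map_sum]
        have h1 : ∀ i, S (Pi.single i (v i)) = Pi.single i (y i) := by
          intro i
          rw [hSdef, hpolydiag]
          exact congrArg (Pi.single i) ((σe i).apply_symm_apply (y i))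
        rw [Finset.sum_congr rfl fun i _ => h1 i, hsum]
      have hxu : (fun i => ((σe i).symm.trans (θ i)) (x i)) = Θ u := by
        funext i
        rfl
      have hyv : (fun i => ((σe i).symm.trans (θ i)) (y i)) = Θ v := by
        funext i
        rfl
      rw [hxu, hyv, ← key]
      have hTu : T u = S (S u) := by rw [← hq]; rfl
      rw [hTu, hSu]
      have h9 := hpolyadj q x v
      rw [← hSdef] at h9
      rw [h9, hSv]
  · rintro ⟨θ, hθ, _⟩
    exact ⟨θ, hθ⟩
end

section
/- Let (A,σ) be a symmetric quiver algebra, M an ε-representation with form Ψ, and ι : L ↪ M an isotropic subrepresentation (ι(L) ⊆ ι(L)^⊥). Then M degenerates symmetrically to L ⊕ ∇L ⊕ (ι(L)^⊥/ι(L)): there is a one-parameter subgroup λ(t) of the graded isometry group G•(V,Ψ) and a point m in the G•(V,Ψ)-orbit of M such that lim_{t→0} λ(t)·m is isomorphic to L ⊕ ∇L ⊕ (ι(L)^⊥/ι(L)). -/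
/-!  **Statement 18.**  (Isotropic degenerations.)  Symmetric quiver setting: vertices `ι`,
arrows `A`, `s t : A → ι`, anti-involution `(σv, σa)`.  Representations are given by matrices
`X a : Matrix (Fin (d (t a))) (Fin (d (s a))) ℂ` on the graded space `V = ∀ i, ℂ^{d i}`.
The `ε`-quadratic structure is a nondegenerate bilinear form `B` on the total space, pairing
only the components `(i, σv i)`, with `B x y = ε B y x`; `X` is an `ε`-representation, and
`U` is an isotropic subrepresentation with orthogonal `U^⊥` (`Uperp`).

Claim (`M ≤^ε_deg L ⊕ ∇L ⊕ U^⊥/U`, with the one-parameter subgroup of the proof):  there are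
a one-parameter family `λ(c)` of graded isometries (`c ≠ 0`) and a limit representation `N`
of `λ(c)·X` as `c → 0`, which is again an `ε`-representation and is isomorphic to
`L ⊕ (U^⊥/U) ⊕ ∇L`:  concretely there is a decomposition `V = U ⊕ W ⊕ U'` refining
`U^⊥ = U ⊕ W` such that each summand is `N`-invariant, `N` agrees with `X` on `U` (the
summand `L`), agrees with `X` modulo `U` on `W` (the summand realizes `U^⊥/U`), and the form
pairs `U'` perfectly with `U` (so the block of `N` on `U'` is the twisted dual `∇L`). -/


open Module

section AuxSymDeg

variable {E F : Type} [AddCommGroup E] [Module ℂ E] [AddCommGroup F] [Module ℂ F]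

private lemma auxSD_inj (β : E →ₗ[ℂ] F →ₗ[ℂ] ℂ)
    (hl : ∀ x, (∀ y, β x y = 0) → x = 0) : Function.Injective β := by
  rw [← LinearMap.ker_eq_bot, Submodule.eq_bot_iff]
  intro x hx
  exact hl x fun y => by rw [LinearMap.mem_ker.mp hx]; rfl

private lemma auxSD_rank_eq [FiniteDimensional ℂ E] [FiniteDimensional ℂ F]
    (β : E →ₗ[ℂ] F →ₗ[ℂ] ℂ)
    (hl : ∀ x, (∀ y, β x y = 0) → x = 0)
    (hr : ∀ y, (∀ x, β x y = 0) → y = 0) :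
    finrank ℂ E = finrank ℂ F := by
  have hinj := auxSD_inj β hl
  have hinj' : Function.Injective β.flip := auxSD_inj β.flip (fun y hy => hr y hy)
  have h1 : finrank ℂ E ≤ finrank ℂ F := by
    have := LinearMap.finrank_le_finrank_of_injective hinj
    rwa [Subspace.dual_finrank_eq] at this
  have h2 : finrank ℂ F ≤ finrank ℂ E := by
    have := LinearMap.finrank_le_finrank_of_injective hinj'
    rwa [Subspace.dual_finrank_eq] at this
  omega

private lemma auxSD_bij [FiniteDimensional ℂ E] [FiniteDimensional ℂ F]
    (β : E →ₗ[ℂ] F →ₗ[ℂ] ℂ)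
    (hl : ∀ x, (∀ y, β x y = 0) → x = 0)
    (hr : ∀ y, (∀ x, β x y = 0) → y = 0) :
    Function.Bijective β := by
  have hinj := auxSD_inj β hl
  refine ⟨hinj, ?_⟩
  rw [← LinearMap.range_eq_top]
  apply Submodule.eq_top_of_finrank_eq
  have h3 := LinearMap.finrank_range_add_finrank_ker β
  rw [LinearMap.ker_eq_bot.mpr hinj, finrank_bot] at h3
  rw [Subspace.dual_finrank_eq, ← auxSD_rank_eq β hl hr]
  omega

private lemma auxSD_dualAnn [FiniteDimensional ℂ E] (Q : Submodule ℂ E) :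
    finrank ℂ Q.dualAnnihilator + finrank ℂ Q = finrank ℂ E := by
  rw [← (Subspace.quotEquivAnnihilator Q).finrank_eq]
  exact Submodule.finrank_quotient_add_finrank Q

private lemma auxSD_comap_finrank [FiniteDimensional ℂ E] [FiniteDimensional ℂ F]
    (f : E →ₗ[ℂ] F) (hf : Function.Bijective f) (p : Submodule ℂ F) :
    finrank ℂ (p.comap f) = finrank ℂ p := by
  have h : p.comap f = p.comap (LinearEquiv.ofBijective f hf : E →ₗ[ℂ] F) := rfl
  rw [h, Submodule.comap_equiv_eq_map_symm]
  exact LinearEquiv.finrank_map_eq _ _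

private lemma auxSD_compl_in {S T : Submodule ℂ E} (h : S ≤ T) :
    ∃ W : Submodule ℂ E, S ⊓ W = ⊥ ∧ S ⊔ W = T := by
  obtain ⟨W', hW'⟩ := Submodule.exists_isCompl (S.comap T.subtype)
  have hS : (S.comap T.subtype).map T.subtype = S := by
    rw [Submodule.map_comap_subtype, inf_eq_right.mpr h]
  refine ⟨W'.map T.subtype, ?_, ?_⟩
  · rw [← hS, ← Submodule.map_inf _ (Submodule.injective_subtype T),
      disjoint_iff.mp hW'.disjoint, Submodule.map_bot]
  · rw [← hS, ← Submodule.map_sup, codisjoint_iff.mp hW'.codisjoint,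
      Submodule.map_top, Submodule.range_subtype]

end AuxSymDeg

set_option maxHeartbeats 2000000 in
set_option synthInstance.maxHeartbeats 400000 in
theorem symmetric_degeneration_of_isotropic_subrep
    {ι A : Type} [Fintype ι] [Fintype A] [DecidableEq ι]
    (s t : A → ι) (σv : ι → ι) (σa : A → A)
    (hσv : ∀ i, σv (σv i) = i) (hσa : ∀ a, σa (σa a) = a)
    (hs : ∀ a, s (σa a) = σv (t a)) (ht : ∀ a, t (σa a) = σv (s a))
    (d : ι → ℕ)
    (ε : ℂ) (hε : ε = 1 ∨ ε = -1)
    (B : (∀ i, Fin (d i) → ℂ) →ₗ[ℂ] (∀ i, Fin (d i) → ℂ) →ₗ[ℂ] ℂ)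
    (hnondeg : ∀ x, (∀ y, B x y = 0) → x = 0)
    (hepsilon : ∀ x y, B x y = ε * B y x)
    (hcompat : ∀ i j : ι, j ≠ σv i → ∀ (x : Fin (d i) → ℂ) (y : Fin (d j) → ℂ),
      B (Pi.single i x) (Pi.single j y) = 0)
    (X : ∀ a : A, Matrix (Fin (d (t a))) (Fin (d (s a))) ℂ)
    (hXrep : ∀ a : A, ∀ (x : Fin (d (s a)) → ℂ) (y : Fin (d (s (σa a))) → ℂ),
      B (Pi.single (t a) ((X a).mulVec x)) (Pi.single (s (σa a)) y) +
        B (Pi.single (s a) x) (Pi.single (t (σa a)) ((X (σa a)).mulVec y)) = 0)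
    (U : ∀ i, Submodule ℂ (Fin (d i) → ℂ))
    (hUsub : ∀ a : A, ∀ x ∈ U (s a), (X a).mulVec x ∈ U (t a))
    (hUiso : ∀ i, ∀ x ∈ U i, ∀ j, ∀ y ∈ U j,
      B (Pi.single i x) (Pi.single j y) = 0)
    (Uperp : ∀ i, Submodule ℂ (Fin (d i) → ℂ))
    (hUperp : ∀ i (x : Fin (d i) → ℂ), x ∈ Uperp i ↔
      ∀ j : ι, ∀ y ∈ U j, B (Pi.single i x) (Pi.single j y) = 0) :
    ∃ (W U' : ∀ i, Submodule ℂ (Fin (d i) → ℂ))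
      (lam : ℂ → ∀ i, GL (Fin (d i)) ℂ)
      (N : ∀ a : A, Matrix (Fin (d (t a))) (Fin (d (s a))) ℂ),
      -- the decomposition `V = U ⊕ W ⊕ U'` refines `U^⊥ = U ⊕ W`
      (∀ i, U i ⊓ W i = ⊥) ∧
      (∀ i, (U i ⊔ W i) ⊓ U' i = ⊥) ∧
      (∀ i, U i ⊔ W i ⊔ U' i = ⊤) ∧
      (∀ i, U i ⊔ W i = Uperp i) ∧
      -- `λ(c)` is a graded isometry for every `c ≠ 0`
      (∀ c : ℂ, c ≠ 0 → ∀ x y : ∀ i, Fin (d i) → ℂ,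
        B (fun i => (↑(lam c i) : Matrix _ _ ℂ).mulVec (x i))
          (fun i => (↑(lam c i) : Matrix _ _ ℂ).mulVec (y i)) = B x y) ∧
      -- `N` is the limit of `λ(c)·X` as `c → 0`; in particular `N` lies in the closure of
      -- the orbit of `X` under the graded isometry group
      Filter.Tendsto
        (fun c : ℂ => fun a : A =>
          (↑(lam c (t a)) : Matrix (Fin (d (t a))) (Fin (d (t a))) ℂ) * X a *
            (↑(lam c (s a))⁻¹ : Matrix (Fin (d (s a))) (Fin (d (s a))) ℂ))
        (nhdsWithin (0 : ℂ) {(0 : ℂ)}ᶜ) (nhds N) ∧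
      -- `N` is again an `ε`-representation
      (∀ a : A, ∀ (x : Fin (d (s a)) → ℂ) (y : Fin (d (s (σa a))) → ℂ),
        B (Pi.single (t a) ((N a).mulVec x)) (Pi.single (s (σa a)) y) +
          B (Pi.single (s a) x) (Pi.single (t (σa a)) ((N (σa a)).mulVec y)) = 0) ∧
      -- `N ≅ L ⊕ (U^⊥/U) ⊕ ∇L`:
      (∀ a : A, ∀ x ∈ U (s a), (N a).mulVec x = (X a).mulVec x) ∧
      (∀ a : A, ∀ x ∈ W (s a),
        (N a).mulVec x ∈ W (t a) ∧ (X a).mulVec x - (N a).mulVec x ∈ U (t a)) ∧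
      (∀ a : A, ∀ x ∈ U' (s a), (N a).mulVec x ∈ U' (t a)) ∧
      -- the form pairs `U'` perfectly with `U`, identifying the `U'`-block with `∇L`
      (∀ i, ∀ x ∈ U' i,
        (∀ y ∈ U (σv i), B (Pi.single i x) (Pi.single (σv i) y) = 0) → x = 0) := by
  classical
  have hε2 : ε * ε = 1 := by rcases hε with h | h <;> rw [h] <;> ring
  have hσinj : ∀ i j, σv i = σv j → i = j := fun i j h => by
    have := congrArg σv h; rwa [hσv, hσv] at this
  let sing : ∀ i, (Fin (d i) → ℂ) →ₗ[ℂ] (∀ j, Fin (d j) → ℂ) :=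
    fun i => LinearMap.single ℂ (fun j => Fin (d j) → ℂ) i
  let bL : ∀ i j, (Fin (d i) → ℂ) →ₗ[ℂ] (Fin (d j) → ℂ) →ₗ[ℂ] ℂ :=
    fun i j => (B.comp (sing i)).compl₂ (sing j)
  have hbL : ∀ i j (x : Fin (d i) → ℂ) (y : Fin (d j) → ℂ),
      bL i j x y = B (Pi.single i x) (Pi.single j y) := fun _ _ _ _ => rfl
  have hbs : ∀ i j (x : Fin (d i) → ℂ) (y : Fin (d j) → ℂ),
      bL i j x y = ε * bL j i y x := fun i j x y => hepsilon _ _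
  have hb0 : ∀ i j, j ≠ σv i → ∀ (x : Fin (d i) → ℂ) (y : Fin (d j) → ℂ),
      bL i j x y = 0 := fun i j h x y => hcompat i j h x y
  have hb_addl : ∀ i j (x x' : Fin (d i) → ℂ) (y : Fin (d j) → ℂ),
      bL i j (x + x') y = bL i j x y + bL i j x' y := by
    intro i j x x' y; rw [map_add]; rfl
  have hb_addr : ∀ i j (x : Fin (d i) → ℂ) (y y' : Fin (d j) → ℂ),
      bL i j x (y + y') = bL i j x y + bL i j x y' := by
    intro i j x y y'; rw [map_add]
  have hb_subl : ∀ i j (x x' : Fin (d i) → ℂ) (y : Fin (d j) → ℂ),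
      bL i j (x - x') y = bL i j x y - bL i j x' y := by
    intro i j x x' y; rw [map_sub]; rfl
  have hb_subr : ∀ i j (x : Fin (d i) → ℂ) (y y' : Fin (d j) → ℂ),
      bL i j x (y - y') = bL i j x y - bL i j x y' := by
    intro i j x y y'; rw [map_sub]
  have hb_smull : ∀ i j (c : ℂ) (x : Fin (d i) → ℂ) (y : Fin (d j) → ℂ),
      bL i j (c • x) y = c * bL i j x y := by
    intro i j c x y; rw [map_smul]; rfl
  have hb_smulr : ∀ i j (c : ℂ) (x : Fin (d i) → ℂ) (y : Fin (d j) → ℂ),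
      bL i j x (c • y) = c * bL i j x y := by
    intro i j c x y; rw [map_smul]; rfl
  have hnd : ∀ i (x : Fin (d i) → ℂ), (∀ j (y : Fin (d j) → ℂ), bL i j x y = 0) → x = 0 := by
    intro i x hx
    have h1 : (Pi.single i x : ∀ j, Fin (d j) → ℂ) = 0 := by
      apply hnondeg
      intro y
      have hy : y = ∑ j, Pi.single j (y j) := (Finset.univ_sum_single y).symm
      rw [hy, map_sum]
      exact Finset.sum_eq_zero fun j _ => hx j (y j)
    simpa using congrFun h1 i
  have hndL : ∀ i (x : Fin (d i) → ℂ), (∀ y, bL i (σv i) x y = 0) → x = 0 := by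
    intro i x hx
    refine hnd i x fun j y => ?_
    by_cases h : j = σv i
    · subst h; exact hx y
    · exact hb0 i j h x y
  have hndR : ∀ i (y : Fin (d (σv i)) → ℂ), (∀ x, bL i (σv i) x y = 0) → y = 0 := by
    intro i y hy
    refine hnd (σv i) y fun j z => ?_
    rw [hbs]
    by_cases h : j = i
    · subst h; rw [hy z, mul_zero]
    · rw [hb0 j (σv i) (fun hc => h (hσinj j i hc.symm)) z y, mul_zero]
  have hUperp' : ∀ i (x : Fin (d i) → ℂ), x ∈ Uperp i ↔
      ∀ y ∈ U (σv i), bL i (σv i) x y = 0 := by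
    intro i x
    rw [hUperp]
    constructor
    · exact fun h y hy => h (σv i) y hy
    · intro h j y hy
      by_cases hj : j = σv i
      · subst hj; exact h y hy
      · exact hb0 i j hj x y
  have hUU : ∀ i, U i ≤ Uperp i := by
    intro i x hx
    rw [hUperp]
    exact fun j y hy => hUiso i x hx j y hy
  have hUperpKill : ∀ i, ∀ x ∈ Uperp i, ∀ j, ∀ y ∈ U j, bL i j x y = 0 :=
    fun i x hx j y hy => (hUperp i x).mp hx j y hy
  have hUperpPair : ∀ i, ∀ x ∈ U i, ∀ j, ∀ z ∈ Uperp j, bL i j x z = 0 := by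
    intro i x hx j z hz
    rw [hbs, hUperpKill j z hz i x hx, mul_zero]
  -- full pairing bijective, dimensions
  have hbij : ∀ i, Function.Bijective (bL i (σv i)) := fun i => auxSD_bij _ (hndL i) (hndR i)
  have hdd : ∀ i, d (σv i) = d i := by
    intro i
    have h := auxSD_rank_eq (bL i (σv i)) (hndL i) (hndR i)
    simpa [Module.finrank_fin_fun] using h.symm
  have hperp_dim : ∀ i (Q : Submodule ℂ (Fin (d (σv i)) → ℂ)),
      finrank ℂ (Q.dualAnnihilator.comap (bL i (σv i))) + finrank ℂ Q = d i := by
    intro i Q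
    rw [auxSD_comap_finrank _ (hbij i)]
    have h := auxSD_dualAnn Q
    rw [Module.finrank_fin_fun] at h
    exact h.trans (hdd i)
  have hUperp_eq : ∀ i, Uperp i = ((U (σv i)).dualAnnihilator.comap (bL i (σv i))) := by
    intro i; ext x
    rw [hUperp' i x, Submodule.mem_comap, Submodule.mem_dualAnnihilator]
  have hUperp_dim : ∀ i, finrank ℂ (Uperp i) + finrank ℂ (U (σv i)) = d i := by
    intro i; rw [hUperp_eq i]; exact hperp_dim i _
  have hdperp : ∀ i (x : Fin (d i) → ℂ),
      (∀ j, ∀ z ∈ Uperp j, bL i j x z = 0) → x ∈ U i := by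
    intro i x hx
    have hkey : U i = ((Uperp (σv i)).dualAnnihilator.comap (bL i (σv i))) := by
      apply Submodule.eq_of_le_of_finrank_le
      · intro u hu
        rw [Submodule.mem_comap, Submodule.mem_dualAnnihilator]
        intro z hz
        exact hUperpPair i u hu (σv i) z hz
      · have h1 := hperp_dim i (Uperp (σv i))
        have h2 := hUperp_dim (σv i)
        have h3 : finrank ℂ (U (σv (σv i))) = finrank ℂ (U i) :=
          congrArg (fun j => finrank ℂ (U j)) (hσv i)
        have h4 := hdd i
        omega
    rw [hkey, Submodule.mem_comap, Submodule.mem_dualAnnihilator]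
    exact fun z hz => hx (σv i) z hz

  -- choose W and C
  choose W hWi hWs using fun i => auxSD_compl_in (hUU i)
  choose C hCi hCs using fun i => auxSD_compl_in (le_top : Uperp i ≤ ⊤)
  have hWle : ∀ i, W i ≤ Uperp i := fun i => (hWs i) ▸ le_sup_right
  -- nondegeneracy of the W-pairing
  have hWndL : ∀ i, ∀ w ∈ W i, (∀ z ∈ W (σv i), bL i (σv i) w z = 0) → w = 0 := by
    intro i w hw hz
    have hmem : w ∈ U i := by
      apply hdperp
      intro j z hzperp
      by_cases hj : j = σv i
      · subst hj
        rw [← hWs (σv i)] at hzperp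
        obtain ⟨u, hu, v, hv, rfl⟩ := Submodule.mem_sup.mp hzperp
        rw [hb_addr, hUperpKill i w (hWle i hw) (σv i) u hu, hz v hv, add_zero]
      · exact hb0 i j hj w z
    have h2 : w ∈ U i ⊓ W i := ⟨hmem, hw⟩
    rw [hWi i] at h2
    simpa using h2
  have hWndR : ∀ i, ∀ z ∈ W (σv i), (∀ w ∈ W i, bL i (σv i) w z = 0) → z = 0 := by
    intro i z hzW hw
    have hmem : z ∈ U (σv i) := by
      apply hdperp
      intro j y hyperp
      rw [hbs]
      by_cases hj : j = i
      · subst hj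
        rw [← hWs j] at hyperp
        obtain ⟨u, hu, v, hv, rfl⟩ := Submodule.mem_sup.mp hyperp
        rw [hb_addl, hw v hv, hbs, hUperpKill (σv j) z (hWle (σv j) hzW) j u hu]
        ring
      · rw [hb0 j (σv i) (fun hc => hj (hσinj j i hc.symm)) y z, mul_zero]
    have h2 : z ∈ U (σv i) ⊓ W (σv i) := ⟨hmem, hzW⟩
    rw [hWi (σv i)] at h2
    simpa using h2
  -- pairing of two submodules
  let pairPQ : ∀ (i : ι) (P : Submodule ℂ (Fin (d i) → ℂ)) (Q : Submodule ℂ (Fin (d (σv i)) → ℂ)),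
      (P →ₗ[ℂ] (Q →ₗ[ℂ] ℂ)) := fun i P Q => ((bL i (σv i)).domRestrict P).compl₂ Q.subtype
  have hWbij : ∀ i, Function.Bijective (pairPQ i (W i) (W (σv i))) := by
    intro i
    apply auxSD_bij
    · rintro ⟨w, hw⟩ hz
      exact Subtype.ext (hWndL i w hw (fun z hz' => hz ⟨z, hz'⟩))
    · rintro ⟨z, hz⟩ hww
      exact Subtype.ext (hWndR i z hz (fun w hw' => hww ⟨w, hw'⟩))
  -- the correction map τ towards W
  let τ : ∀ i, (Fin (d i) → ℂ) →ₗ[ℂ] (Fin (d i) → ℂ) := fun i =>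
    (W i).subtype ∘ₗ ((LinearEquiv.ofBijective _ (hWbij i)).symm.toLinearMap ∘ₗ
      ((bL i (σv i)).compl₂ (W (σv i)).subtype))
  have hτW : ∀ i v, τ i v ∈ W i := fun i v => SetLike.coe_mem _
  have hτ : ∀ i v j, ∀ z ∈ W j, bL i j (τ i v) z = bL i j v z := by
    intro i v j z hz
    by_cases hj : j = σv i
    · subst hj
      have h := (LinearEquiv.ofBijective _ (hWbij i)).apply_symm_apply
        (((bL i (σv i)).compl₂ (W (σv i)).subtype) v)
      exact congrArg (fun f => f ⟨z, hz⟩) h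
    · rw [hb0 i j hj, hb0 i j hj]
  let Tm : ∀ i, (Fin (d i) → ℂ) →ₗ[ℂ] (Fin (d i) → ℂ) := fun i => LinearMap.id - τ i
  let C1 : ∀ i, Submodule ℂ (Fin (d i) → ℂ) := fun i => (C i).map (Tm i)
  have hTm : ∀ i v, Tm i v = v - τ i v := fun i v => rfl
  have hC1perpW : ∀ i, ∀ x ∈ C1 i, ∀ j, ∀ z ∈ W j, bL i j x z = 0 := by
    rintro i x ⟨c, hc, rfl⟩ j z hz
    rw [hTm, hb_subl, hτ i c j z hz, sub_self]
  have hC1i : ∀ i, Uperp i ⊓ C1 i = ⊥ := by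
    intro i
    rw [Submodule.eq_bot_iff]
    rintro x ⟨hxp, c, hc, rfl⟩
    have hcUp : c ∈ Uperp i := by
      have h2 : c = Tm i c + τ i c := by rw [hTm]; abel
      rw [h2]
      exact (Uperp i).add_mem hxp (hWle i (hτW i c))
    have h3 : c ∈ Uperp i ⊓ C i := ⟨hcUp, hc⟩
    rw [hCi i] at h3
    have hc0 : c = 0 := by simpa using h3
    rw [hc0, map_zero]
  have hC1s : ∀ i, Uperp i ⊔ C1 i = ⊤ := by
    intro i
    rw [eq_top_iff, ← hCs i]
    apply sup_le le_sup_left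
    intro c hc
    have h2 : c = Tm i c + τ i c := by rw [hTm]; abel
    rw [h2]
    exact Submodule.add_mem _ (Submodule.mem_sup_right ⟨c, hc, rfl⟩)
      (Submodule.mem_sup_left (hWle i (hτW i c)))
  -- the pairing between U and C1 is perfect
  have hUC1bij : ∀ i, Function.Bijective (pairPQ i (U i) (C1 (σv i))) := by
    intro i
    apply auxSD_bij
    · rintro ⟨u, hu⟩ h
      refine Subtype.ext (hndL i u ?_)
      intro y
      have hy : y ∈ (⊤ : Submodule ℂ (Fin (d (σv i)) → ℂ)) := Submodule.mem_top
      rw [← hC1s (σv i)] at hy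
      obtain ⟨p, hp, q, hq, rfl⟩ := Submodule.mem_sup.mp hy
      have h2 : bL i (σv i) u q = 0 := h ⟨q, hq⟩
      rw [hb_addr, hUperpPair i u hu (σv i) p hp, h2, add_zero]
    · rintro ⟨z, hz⟩ h
      refine Subtype.ext ?_
      have hmem : z ∈ U (σv i) := by
        apply hdperp
        intro j y hyp
        rw [hbs]
        by_cases hj : j = i
        · subst hj
          rw [← hWs j] at hyp
          obtain ⟨u, hu, w, hw, rfl⟩ := Submodule.mem_sup.mp hyp
          have h2 : bL j (σv j) u z = 0 := h ⟨u, hu⟩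
          rw [hb_addl, h2, hbs, hC1perpW (σv j) z hz j w hw]
          ring
        · rw [hb0 j (σv i) (fun hc => hj (hσinj j i hc.symm)) y z, mul_zero]
      have h3 : z ∈ Uperp (σv i) ⊓ C1 (σv i) := ⟨hUU (σv i) hmem, hz⟩
      rw [hC1i (σv i)] at h3
      simpa using h3
  -- the correction map ρ towards U (with the 1/2 factor)
  let ρ : ∀ i, (Fin (d i) → ℂ) →ₗ[ℂ] (Fin (d i) → ℂ) := fun i =>
    (U i).subtype ∘ₗ ((LinearEquiv.ofBijective _ (hUC1bij i)).symm.toLinearMap ∘ₗ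
      ((2 : ℂ)⁻¹ • ((bL i (σv i)).compl₂ (C1 (σv i)).subtype)))
  have hρU : ∀ i v, ρ i v ∈ U i := fun i v => SetLike.coe_mem _
  have hρ : ∀ i v j, ∀ z ∈ C1 j, bL i j (ρ i v) z = (2 : ℂ)⁻¹ * bL i j v z := by
    intro i v j z hz
    by_cases hj : j = σv i
    · subst hj
      have h := (LinearEquiv.ofBijective _ (hUC1bij i)).apply_symm_apply
        (((2 : ℂ)⁻¹ • ((bL i (σv i)).compl₂ (C1 (σv i)).subtype)) v)
      have h2 := congrArg (fun f => f ⟨z, hz⟩) h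
      simp only [LinearMap.smul_apply, LinearMap.compl₂_apply,
        Submodule.coe_subtype, smul_eq_mul] at h2 ⊢
      exact h2
    · rw [hb0 i j hj, hb0 i j hj, mul_zero]
  -- the isotropic complement U'
  let Sm : ∀ i, (Fin (d i) → ℂ) →ₗ[ℂ] (Fin (d i) → ℂ) := fun i => LinearMap.id - ρ i
  let U' : ∀ i, Submodule ℂ (Fin (d i) → ℂ) := fun i => (C1 i).map (Sm i)
  have hSm : ∀ i v, Sm i v = v - ρ i v := fun i v => rfl
  have hU'i : ∀ i, Uperp i ⊓ U' i = ⊥ := by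
    intro i
    rw [Submodule.eq_bot_iff]
    rintro x ⟨hxp, c, hc, rfl⟩
    have hcUp : c ∈ Uperp i := by
      have h2 : c = Sm i c + ρ i c := by rw [hSm]; abel
      rw [h2]
      exact (Uperp i).add_mem hxp (hUU i (hρU i c))
    have h3 : c ∈ Uperp i ⊓ C1 i := ⟨hcUp, hc⟩
    rw [hC1i i] at h3
    have hc0 : c = 0 := by simpa using h3
    rw [hc0, map_zero]
  have hU's : ∀ i, Uperp i ⊔ U' i = ⊤ := by
    intro i
    rw [eq_top_iff, ← hC1s i]
    apply sup_le le_sup_left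
    intro c hc
    have h2 : c = Sm i c + ρ i c := by rw [hSm]; abel
    rw [h2]
    exact Submodule.add_mem _ (Submodule.mem_sup_right ⟨c, hc, rfl⟩)
      (Submodule.mem_sup_left (hUU i (hρU i c)))
  have hU'perpW : ∀ i, ∀ x ∈ U' i, ∀ j, ∀ z ∈ W j, bL i j x z = 0 := by
    rintro i x ⟨c, hc, rfl⟩ j z hz
    rw [hSm, hb_subl, hC1perpW i c hc j z hz, hUperpPair i (ρ i c) (hρU i c) j z (hWle j hz),
      sub_self]
  have hWperpU' : ∀ i, ∀ w ∈ W i, ∀ j, ∀ x ∈ U' j, bL i j w x = 0 := by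
    intro i w hw j x hx
    rw [hbs, hU'perpW j x hx i w hw, mul_zero]
  have hU'iso : ∀ i, ∀ x ∈ U' i, ∀ j, ∀ y ∈ U' j, bL i j x y = 0 := by
    rintro i x ⟨c, hc, rfl⟩ j y ⟨c', hc', rfl⟩
    by_cases hj : j = σv i
    · subst hj
      have hz1 : bL i (σv i) (ρ i c) c' = (2 : ℂ)⁻¹ * bL i (σv i) c c' := hρ i c (σv i) c' hc'
      have hz2 : bL i (σv i) (ρ i c) (ρ (σv i) c') = 0 :=
        hUiso i _ (hρU i c) (σv i) _ (hρU (σv i) c')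
      have hz3 : bL (σv i) i (ρ (σv i) c') c = (2 : ℂ)⁻¹ * bL (σv i) i c' c := hρ (σv i) c' i c hc
      have hz4 : bL i (σv i) c (ρ (σv i) c') = ε * ((2 : ℂ)⁻¹ * (ε * bL i (σv i) c c')) := by
        rw [hbs i (σv i) c (ρ (σv i) c'), hz3, hbs (σv i) i c' c]
      rw [hSm, hSm, hb_subl, hb_subr, hb_subr, hz1, hz2, hz4]
      linear_combination (-(2 : ℂ)⁻¹ * (bL i (σv i) c c')) * hε2
    · exact hb0 i j hj _ _

  -- the three-fold direct sum decomposition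
  have hUWU' : ∀ i, U i ⊔ W i ⊔ U' i = ⊤ := by
    intro i; rw [hWs i]; exact hU's i
  have hUWinfU' : ∀ i, (U i ⊔ W i) ⊓ U' i = ⊥ := by
    intro i; rw [hWs i]; exact hU'i i
  have hcU : ∀ i, IsCompl (U i) (W i ⊔ U' i) := by
    intro i
    constructor
    · rw [disjoint_iff, Submodule.eq_bot_iff]
      rintro x ⟨hxU, hxWU⟩
      obtain ⟨w, hw, u', hu', hsum⟩ := Submodule.mem_sup.mp hxWU
      have h1 : u' ∈ Uperp i := by
        have h0 : u' = x - w := by rw [← hsum]; abel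
        rw [h0]
        exact Submodule.sub_mem _ (hUU i hxU) (hWle i hw)
      have h2 : u' ∈ Uperp i ⊓ U' i := ⟨h1, hu'⟩
      rw [hU'i i] at h2
      have h3 : u' = 0 := by simpa using h2
      have h4 : x ∈ U i ⊓ W i := ⟨hxU, by rw [← hsum, h3, add_zero]; exact hw⟩
      rw [hWi i] at h4; simpa using h4
    · rw [codisjoint_iff, ← sup_assoc]; exact hUWU' i
  have hcW : ∀ i, IsCompl (W i) (U i ⊔ U' i) := by
    intro i
    constructor
    · rw [disjoint_iff, Submodule.eq_bot_iff]
      rintro x ⟨hxW, hxUU⟩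
      obtain ⟨u, hu, u', hu', hsum⟩ := Submodule.mem_sup.mp hxUU
      have h1 : u' ∈ Uperp i := by
        have h0 : u' = x - u := by rw [← hsum]; abel
        rw [h0]; exact Submodule.sub_mem _ (hWle i hxW) (hUU i hu)
      have h2 : u' ∈ Uperp i ⊓ U' i := ⟨h1, hu'⟩
      rw [hU'i i] at h2
      have h3 : u' = 0 := by simpa using h2
      have h4 : x ∈ U i ⊓ W i := ⟨by rw [← hsum, h3, add_zero]; exact hu, hxW⟩
      rw [hWi i] at h4; simpa using h4
    · rw [codisjoint_iff, sup_left_comm, ← sup_assoc]; exact hUWU' i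
  have hcU' : ∀ i, IsCompl (U' i) (U i ⊔ W i) := by
    intro i
    constructor
    · rw [disjoint_iff, inf_comm]; exact hUWinfU' i
    · rw [codisjoint_iff, sup_comm]; exact hUWU' i
  -- projections
  let pU : ∀ i, (Fin (d i) → ℂ) →ₗ[ℂ] (Fin (d i) → ℂ) := fun i =>
    (U i).subtype ∘ₗ ((U i).linearProjOfIsCompl _ (hcU i))
  let pW : ∀ i, (Fin (d i) → ℂ) →ₗ[ℂ] (Fin (d i) → ℂ) := fun i =>
    (W i).subtype ∘ₗ ((W i).linearProjOfIsCompl _ (hcW i))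
  let pU' : ∀ i, (Fin (d i) → ℂ) →ₗ[ℂ] (Fin (d i) → ℂ) := fun i =>
    (U' i).subtype ∘ₗ ((U' i).linearProjOfIsCompl _ (hcU' i))
  have hpU_mem : ∀ i x, pU i x ∈ U i := fun i x => SetLike.coe_mem _
  have hpW_mem : ∀ i x, pW i x ∈ W i := fun i x => SetLike.coe_mem _
  have hpU'_mem : ∀ i x, pU' i x ∈ U' i := fun i x => SetLike.coe_mem _
  have hpU_id : ∀ i x, x ∈ U i → pU i x = x := by
    intro i x hx
    show ((U i).subtype) ((U i).linearProjOfIsCompl _ (hcU i) x) = x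
    exact congrArg (U i).subtype (Submodule.projectionOnto_apply_left (hcU i) ⟨x, hx⟩)
  have hpW_id : ∀ i x, x ∈ W i → pW i x = x := by
    intro i x hx
    show ((W i).subtype) ((W i).linearProjOfIsCompl _ (hcW i) x) = x
    exact congrArg (W i).subtype (Submodule.projectionOnto_apply_left (hcW i) ⟨x, hx⟩)
  have hpU'_id : ∀ i x, x ∈ U' i → pU' i x = x := by
    intro i x hx
    show ((U' i).subtype) ((U' i).linearProjOfIsCompl _ (hcU' i) x) = x
    exact congrArg (U' i).subtype (Submodule.projectionOnto_apply_left (hcU' i) ⟨x, hx⟩)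
  have hpU_zero : ∀ i x, x ∈ W i ⊔ U' i → pU i x = 0 := by
    intro i x hx
    show ((U i).subtype) ((U i).linearProjOfIsCompl _ (hcU i) x) = 0
    exact (congrArg (U i).subtype (Submodule.projectionOnto_apply_of_mem_right (hcU i) hx)).trans (map_zero _)
  have hpW_zero : ∀ i x, x ∈ U i ⊔ U' i → pW i x = 0 := by
    intro i x hx
    show ((W i).subtype) ((W i).linearProjOfIsCompl _ (hcW i) x) = 0
    exact (congrArg (W i).subtype (Submodule.projectionOnto_apply_of_mem_right (hcW i) hx)).trans (map_zero _)
  have hpU'_zero : ∀ i x, x ∈ U i ⊔ W i → pU' i x = 0 := by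
    intro i x hx
    show ((U' i).subtype) ((U' i).linearProjOfIsCompl _ (hcU' i) x) = 0
    exact (congrArg (U' i).subtype (Submodule.projectionOnto_apply_of_mem_right (hcU' i) hx)).trans (map_zero _)
  have hpU_W : ∀ i x, x ∈ W i → pU i x = 0 := fun i x hx => hpU_zero i x (Submodule.mem_sup_left hx)
  have hpU_U' : ∀ i x, x ∈ U' i → pU i x = 0 := fun i x hx => hpU_zero i x (Submodule.mem_sup_right hx)
  have hpW_U : ∀ i x, x ∈ U i → pW i x = 0 := fun i x hx => hpW_zero i x (Submodule.mem_sup_left hx)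
  have hpW_U' : ∀ i x, x ∈ U' i → pW i x = 0 := fun i x hx => hpW_zero i x (Submodule.mem_sup_right hx)
  have hpU'_U : ∀ i x, x ∈ U i → pU' i x = 0 := fun i x hx => hpU'_zero i x (Submodule.mem_sup_left hx)
  have hpU'_W : ∀ i x, x ∈ W i → pU' i x = 0 := fun i x hx => hpU'_zero i x (Submodule.mem_sup_right hx)
  have hpU'_Uperp : ∀ i x, x ∈ Uperp i → pU' i x = 0 := by
    intro i x hx
    apply hpU'_zero
    rw [hWs i]; exact hx
  have hsum3 : ∀ i x, pU i x + pW i x + pU' i x = x := by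
    intro i x
    have hx : x ∈ U i ⊔ W i ⊔ U' i := by rw [hUWU' i]; trivial
    obtain ⟨y, hy, u', hu', hsum1⟩ := Submodule.mem_sup.mp hx
    obtain ⟨u, hu, w, hw, hsum2⟩ := Submodule.mem_sup.mp hy
    rw [← hsum1, ← hsum2]
    simp only [map_add]
    rw [hpU_id i u hu, hpU_W i w hw, hpU_U' i u' hu', hpW_U i u hu, hpW_id i w hw,
      hpW_U' i u' hu', hpU'_U i u hu, hpU'_W i w hw, hpU'_id i u' hu']
    abel
  -- remaining orthogonality, and the expansion of the form in blocks
  have hUUz : ∀ i j x, x ∈ U i → ∀ y, y ∈ U j → bL i j x y = 0 :=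
    fun i j x hx y hy => hUiso i x hx j y hy
  have hUWz : ∀ i j x, x ∈ U i → ∀ y, y ∈ W j → bL i j x y = 0 :=
    fun i j x hx y hy => hUperpPair i x hx j y (hWle j hy)
  have hWUz : ∀ i j x, x ∈ W i → ∀ y, y ∈ U j → bL i j x y = 0 :=
    fun i j x hx y hy => hUperpKill i x (hWle i hx) j y hy
  have hbExpand : ∀ i j (x : Fin (d i) → ℂ) (y : Fin (d j) → ℂ),
      bL i j x y = bL i j (pU i x) (pU' j y) + bL i j (pW i x) (pW j y)
        + bL i j (pU' i x) (pU j y) := by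
    intro i j x y
    conv_lhs => rw [← hsum3 i x, ← hsum3 j y]
    simp only [hb_addl, hb_addr]
    rw [hUUz i j _ (hpU_mem i x) _ (hpU_mem j y),
      hUWz i j _ (hpU_mem i x) _ (hpW_mem j y),
      hWUz i j _ (hpW_mem i x) _ (hpU_mem j y),
      hWperpU' i _ (hpW_mem i x) j _ (hpU'_mem j y),
      hU'perpW i _ (hpU'_mem i x) j _ (hpW_mem j y),
      hU'iso i _ (hpU'_mem i x) j _ (hpU'_mem j y)]
    ring

  -- single additivity helpers
  have hsingle_add : ∀ i (u v : Fin (d i) → ℂ),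
      (Pi.single i (u + v) : ∀ j, Fin (d j) → ℂ) = Pi.single i u + Pi.single i v :=
    fun i u v => map_add (sing i) u v
  have hsingle_smul : ∀ i (c : ℂ) (u : Fin (d i) → ℂ),
      (Pi.single i (c • u) : ∀ j, Fin (d j) → ℂ) = c • (Pi.single i u : ∀ j, Fin (d j) → ℂ) :=
    fun i c u => map_smul (sing i) c u
  -- matrices as linear maps
  let Xl : ∀ a, (Fin (d (s a)) → ℂ) →ₗ[ℂ] (Fin (d (t a)) → ℂ) := fun a => Matrix.toLin' (X a)
  have hXl : ∀ a x, Xl a x = (X a).mulVec x := fun a x => Matrix.toLin'_apply _ _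
  have hmv : ∀ {n m : ℕ} (f : (Fin n → ℂ) →ₗ[ℂ] (Fin m → ℂ)) (x : Fin n → ℂ),
      (LinearMap.toMatrix' f).mulVec x = f x := by
    intro n m f x
    rw [← Matrix.toLin'_apply, Matrix.toLin'_toMatrix']
  have hXU : ∀ a x, x ∈ U (s a) → Xl a x ∈ U (t a) := by
    intro a x hx; rw [hXl]; exact hUsub a x hx
  have hXrep' : ∀ a (x : Fin (d (s a)) → ℂ) (y : Fin (d (s (σa a))) → ℂ),
      bL (t a) (s (σa a)) ((X a).mulVec x) y + bL (s a) (t (σa a)) x ((X (σa a)).mulVec y) = 0 :=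
    fun a x y => hXrep a x y
  have hXUperp : ∀ a x, x ∈ Uperp (s a) → Xl a x ∈ Uperp (t a) := by
    intro a x hx
    rw [hUperp]
    intro j y hy
    rw [← hbL]
    by_cases hj : j = s (σa a)
    · subst hj
      have h1 := hXrep' a x y
      rw [hXl]
      have h2 : bL (t a) (s (σa a)) ((X a).mulVec x) y
          = - bL (s a) (t (σa a)) x ((X (σa a)).mulVec y) := by linear_combination h1
      rw [h2, hUperpKill (s a) x hx (t (σa a)) _ (hUsub (σa a) y hy), neg_zero]
    · have hj' : j ≠ σv (t a) := by rw [← hs a]; exact hj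
      exact hb0 (t a) j hj' _ y
  -- block-zero facts
  have hzWU : ∀ a x, pW (t a) (Xl a (pU (s a) x)) = 0 :=
    fun a x => hpW_U _ _ (hXU a _ (hpU_mem _ x))
  have hzU'U : ∀ a x, pU' (t a) (Xl a (pU (s a) x)) = 0 :=
    fun a x => hpU'_U _ _ (hXU a _ (hpU_mem _ x))
  have hzU'W : ∀ a x, pU' (t a) (Xl a (pW (s a) x)) = 0 :=
    fun a x => hpU'_Uperp _ _ (hXUperp a _ (hWle _ (hpW_mem _ x)))
  -- the limit representation and the error terms
  let nL : ∀ a, (Fin (d (s a)) → ℂ) →ₗ[ℂ] (Fin (d (t a)) → ℂ) := fun a =>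
    pU (t a) ∘ₗ Xl a ∘ₗ pU (s a) + pW (t a) ∘ₗ Xl a ∘ₗ pW (s a) + pU' (t a) ∘ₗ Xl a ∘ₗ pU' (s a)
  let m1 : ∀ a, (Fin (d (s a)) → ℂ) →ₗ[ℂ] (Fin (d (t a)) → ℂ) := fun a =>
    pU (t a) ∘ₗ Xl a ∘ₗ pW (s a) + pW (t a) ∘ₗ Xl a ∘ₗ pU' (s a)
  let m2 : ∀ a, (Fin (d (s a)) → ℂ) →ₗ[ℂ] (Fin (d (t a)) → ℂ) := fun a =>
    pU (t a) ∘ₗ Xl a ∘ₗ pU' (s a)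
  let N : ∀ a, Matrix (Fin (d (t a))) (Fin (d (s a))) ℂ := fun a => LinearMap.toMatrix' (nL a)
  let M1 : ∀ a, Matrix (Fin (d (t a))) (Fin (d (s a))) ℂ := fun a => LinearMap.toMatrix' (m1 a)
  let M2 : ∀ a, Matrix (Fin (d (t a))) (Fin (d (s a))) ℂ := fun a => LinearMap.toMatrix' (m2 a)
  -- the one-parameter family
  let L : ℂ → ∀ i, (Fin (d i) → ℂ) →ₗ[ℂ] (Fin (d i) → ℂ) := fun c i =>
    c • pU i + pW i + c⁻¹ • pU' i
  let L' : ℂ → ∀ i, (Fin (d i) → ℂ) →ₗ[ℂ] (Fin (d i) → ℂ) := fun c i =>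
    c⁻¹ • pU i + pW i + c • pU' i
  have hLapp : ∀ c i x, L c i x = c • pU i x + pW i x + c⁻¹ • pU' i x := fun c i x => rfl
  have hL'app : ∀ c i x, L' c i x = c⁻¹ • pU i x + pW i x + c • pU' i x := fun c i x => rfl
  have hLL' : ∀ (c : ℂ), c ≠ 0 → ∀ i x, L c i (L' c i x) = x := by
    intro c hc i x
    rw [hL'app, hLapp]
    simp only [map_add, map_smul]
    rw [hpU_id i _ (hpU_mem i x), hpU_W i _ (hpW_mem i x), hpU_U' i _ (hpU'_mem i x),
      hpW_U i _ (hpU_mem i x), hpW_id i _ (hpW_mem i x), hpW_U' i _ (hpU'_mem i x),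
      hpU'_U i _ (hpU_mem i x), hpU'_W i _ (hpW_mem i x), hpU'_id i _ (hpU'_mem i x)]
    simp only [smul_zero, add_zero, zero_add, smul_smul, mul_inv_cancel₀ hc,
      inv_mul_cancel₀ hc, one_smul]
    exact hsum3 i x
  have hL'L : ∀ (c : ℂ), c ≠ 0 → ∀ i x, L' c i (L c i x) = x := by
    intro c hc i x
    rw [hLapp, hL'app]
    simp only [map_add, map_smul]
    rw [hpU_id i _ (hpU_mem i x), hpU_W i _ (hpW_mem i x), hpU_U' i _ (hpU'_mem i x),
      hpW_U i _ (hpU_mem i x), hpW_id i _ (hpW_mem i x), hpW_U' i _ (hpU'_mem i x),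
      hpU'_U i _ (hpU_mem i x), hpU'_W i _ (hpW_mem i x), hpU'_id i _ (hpU'_mem i x)]
    simp only [smul_zero, add_zero, zero_add, smul_smul, mul_inv_cancel₀ hc,
      inv_mul_cancel₀ hc, one_smul]
    exact hsum3 i x
  have hMmul : ∀ (c : ℂ), c ≠ 0 → ∀ i,
      LinearMap.toMatrix' (L c i) * LinearMap.toMatrix' (L' c i) = 1 := by
    intro c hc i
    rw [← LinearMap.toMatrix'_comp]
    have h : (L c i) ∘ₗ (L' c i) = LinearMap.id := LinearMap.ext (hLL' c hc i)
    rw [h, LinearMap.toMatrix'_id]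
  have hMmul' : ∀ (c : ℂ), c ≠ 0 → ∀ i,
      LinearMap.toMatrix' (L' c i) * LinearMap.toMatrix' (L c i) = 1 := by
    intro c hc i
    rw [← LinearMap.toMatrix'_comp]
    have h : (L' c i) ∘ₗ (L c i) = LinearMap.id := LinearMap.ext (hL'L c hc i)
    rw [h, LinearMap.toMatrix'_id]
  let lam : ℂ → ∀ i, GL (Fin (d i)) ℂ := fun c =>
    if hc : c = 0 then fun i => 1
    else fun i => ⟨LinearMap.toMatrix' (L c i), LinearMap.toMatrix' (L' c i),
      hMmul c hc i, hMmul' c hc i⟩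
  have hlam1 : ∀ (c : ℂ) (hc : c ≠ 0) i,
      (↑(lam c i) : Matrix (Fin (d i)) (Fin (d i)) ℂ) = LinearMap.toMatrix' (L c i) := by
    intro c hc i
    have h0 : lam c i = ⟨LinearMap.toMatrix' (L c i), LinearMap.toMatrix' (L' c i),
        hMmul c hc i, hMmul' c hc i⟩ := by
      simp only [lam]
      rw [dif_neg hc]
    rw [h0]
  have hlam2 : ∀ (c : ℂ) (hc : c ≠ 0) i,
      (↑((lam c i)⁻¹) : Matrix (Fin (d i)) (Fin (d i)) ℂ) = LinearMap.toMatrix' (L' c i) := by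
    intro c hc i
    have h0 : lam c i = ⟨LinearMap.toMatrix' (L c i), LinearMap.toMatrix' (L' c i),
        hMmul c hc i, hMmul' c hc i⟩ := by
      simp only [lam]
      rw [dif_neg hc]
    rw [h0]
    rfl
  -- scaling of projections under L
  have hpUL : ∀ c i u, pU i (L c i u) = c • pU i u := by
    intro c i u
    rw [hLapp]
    simp only [map_add, map_smul]
    rw [hpU_id i _ (hpU_mem i u), hpU_W i _ (hpW_mem i u), hpU_U' i _ (hpU'_mem i u)]
    simp
  have hpWL : ∀ c i u, pW i (L c i u) = pW i u := by
    intro c i u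
    rw [hLapp]
    simp only [map_add, map_smul]
    rw [hpW_U i _ (hpU_mem i u), hpW_id i _ (hpW_mem i u), hpW_U' i _ (hpU'_mem i u)]
    simp
  have hpU'L : ∀ c i u, pU' i (L c i u) = c⁻¹ • pU' i u := by
    intro c i u
    rw [hLapp]
    simp only [map_add, map_smul]
    rw [hpU'_U i _ (hpU_mem i u), hpU'_W i _ (hpW_mem i u), hpU'_id i _ (hpU'_mem i u)]
    simp
  -- the isometry property, entry by entry
  have hiso1 : ∀ (c : ℂ), c ≠ 0 → ∀ i j (u : Fin (d i) → ℂ) (v : Fin (d j) → ℂ),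
      bL i j (L c i u) (L c j v) = bL i j u v := by
    intro c hc i j u v
    rw [hbExpand i j (L c i u) (L c j v), hbExpand i j u v,
      hpUL c i u, hpU'L c j v, hpWL c i u, hpWL c j v, hpU'L c i u, hpUL c j v]
    simp only [hb_smull, hb_smulr]
    have hcc : c * c⁻¹ = 1 := mul_inv_cancel₀ hc
    linear_combination (bL i j (pU i u) (pU' j v) + bL i j (pU' i u) (pU j v)) * hcc
  have hisoSingle : ∀ (c : ℂ), c ≠ 0 → ∀ i j (u : Fin (d i) → ℂ) (v : Fin (d j) → ℂ),
      B (Pi.single i (L c i u)) (Pi.single j (L c j v)) = B (Pi.single i u) (Pi.single j v) :=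
    fun c hc i j u v => hiso1 c hc i j u v
  have hisoB : ∀ (c : ℂ), c ≠ 0 → ∀ (x y : ∀ i, Fin (d i) → ℂ),
      B (fun i => L c i (x i)) (fun i => L c i (y i)) = B x y := by
    intro c hc x y
    have hd1 : ∀ (z : ∀ i, Fin (d i) → ℂ), z = ∑ i, Pi.single i (z i) :=
      fun z => (Finset.univ_sum_single z).symm
    conv_lhs => rw [hd1 (fun i => L c i (x i)), hd1 (fun i => L c i (y i))]
    conv_rhs => rw [hd1 x, hd1 y]
    simp only [map_sum, LinearMap.sum_apply]
    refine Finset.sum_congr rfl fun i _ => Finset.sum_congr rfl fun j _ => ?_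
    exact hisoSingle c hc j i (x j) (y i)
  -- conjugation identity
  have hLXL : ∀ (c : ℂ), c ≠ 0 → ∀ a,
      (L c (t a)) ∘ₗ (Xl a ∘ₗ (L' c (s a))) = nL a + c • m1 a + c ^ 2 • m2 a := by
    intro c hc a
    apply LinearMap.ext; intro x
    simp only [nL, m1, m2, LinearMap.comp_apply, LinearMap.add_apply, LinearMap.smul_apply,
      hLapp, hL'app, map_add, map_smul, hzWU, hzU'U, hzU'W, smul_zero, add_zero, zero_add]
    match_scalars <;> (field_simp [hc]; try ring)
  have hconjM : ∀ (c : ℂ), c ≠ 0 → ∀ a,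
      (↑(lam c (t a)) : Matrix (Fin (d (t a))) (Fin (d (t a))) ℂ) * X a
        * (↑((lam c (s a))⁻¹) : Matrix (Fin (d (s a))) (Fin (d (s a))) ℂ)
        = N a + c • M1 a + c ^ 2 • M2 a := by
    intro c hc a
    rw [hlam1 c hc (t a), hlam2 c hc (s a),
      show X a = LinearMap.toMatrix' (Xl a) from (LinearMap.toMatrix'_toLin' (X a)).symm,
      ← LinearMap.toMatrix'_comp, ← LinearMap.toMatrix'_comp, LinearMap.comp_assoc,
      hLXL c hc a, map_add, map_add, map_smul, map_smul]
  -- the limit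
  have htend : Filter.Tendsto
      (fun c : ℂ => fun a : A =>
        (↑(lam c (t a)) : Matrix (Fin (d (t a))) (Fin (d (t a))) ℂ) * X a
          * (↑((lam c (s a))⁻¹) : Matrix (Fin (d (s a))) (Fin (d (s a))) ℂ))
      (nhdsWithin (0 : ℂ) {(0 : ℂ)}ᶜ) (nhds N) := by
    have h1 : Filter.Tendsto (fun c : ℂ => fun a : A => N a + c • M1 a + c ^ 2 • M2 a)
        (nhdsWithin (0 : ℂ) {(0 : ℂ)}ᶜ) (nhds N) := by
      apply Filter.Tendsto.mono_left _ nhdsWithin_le_nhds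
      rw [tendsto_pi_nhds]
      intro a
      have h2 : Filter.Tendsto (fun c : ℂ => N a + c • M1 a + c ^ 2 • M2 a) (nhds 0)
          (nhds (N a + (0 : ℂ) • M1 a + ((0 : ℂ)) ^ 2 • M2 a)) := by
        have hA : Filter.Tendsto (fun c : ℂ => c) (nhds 0) (nhds 0) :=
          Filter.tendsto_id
        exact (tendsto_const_nhds.add (hA.smul tendsto_const_nhds)).add
          ((hA.pow 2).smul tendsto_const_nhds)
      simpa using h2
    refine h1.congr' ?_
    filter_upwards [self_mem_nhdsWithin] with c hc
    have hc' : c ≠ 0 := by simpa using hc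
    funext a
    exact (hconjM c hc' a).symm
  -- conjugates are ε-representations
  have hconjRep : ∀ (c : ℂ), c ≠ 0 → ∀ a (x : Fin (d (s a)) → ℂ) (y : Fin (d (s (σa a))) → ℂ),
      B (Pi.single (t a) (((↑(lam c (t a)) : Matrix (Fin (d (t a))) (Fin (d (t a))) ℂ) * X a
          * (↑((lam c (s a))⁻¹) : Matrix (Fin (d (s a))) (Fin (d (s a))) ℂ)).mulVec x))
          (Pi.single (s (σa a)) y)
      + B (Pi.single (s a) x) (Pi.single (t (σa a))
          (((↑(lam c (t (σa a))) : Matrix (Fin (d (t (σa a)))) (Fin (d (t (σa a)))) ℂ)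
          * X (σa a) * (↑((lam c (s (σa a)))⁻¹) : Matrix (Fin (d (s (σa a))))
            (Fin (d (s (σa a)))) ℂ)).mulVec y)) = 0 := by
    intro c hc a x y
    rw [hlam1 c hc (t a), hlam2 c hc (s a), hlam1 c hc (t (σa a)), hlam2 c hc (s (σa a))]
    simp only [← Matrix.mulVec_mulVec]
    simp only [hmv]
    have ht1 : B (Pi.single (t a) (L c (t a) ((X a).mulVec (L' c (s a) x))))
          (Pi.single (s (σa a)) y)
        = B (Pi.single (t a) ((X a).mulVec (L' c (s a) x)))
            (Pi.single (s (σa a)) (L' c (s (σa a)) y)) := by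
      conv_lhs => rw [show y = L c (s (σa a)) (L' c (s (σa a)) y) from (hLL' c hc _ y).symm]
      exact hisoSingle c hc (t a) (s (σa a)) _ _
    have ht2 : B (Pi.single (s a) x)
          (Pi.single (t (σa a)) (L c (t (σa a)) ((X (σa a)).mulVec (L' c (s (σa a)) y))))
        = B (Pi.single (s a) (L' c (s a) x))
            (Pi.single (t (σa a)) ((X (σa a)).mulVec (L' c (s (σa a)) y))) := by
      conv_lhs => rw [show x = L c (s a) (L' c (s a) x) from (hLL' c hc _ x).symm]
      exact hisoSingle c hc (s a) (t (σa a)) _ _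
    rw [ht1, ht2]
    exact hXrep a (L' c (s a) x) (L' c (s (σa a)) y)
  -- N is an ε-representation
  have hNrep : ∀ a (x : Fin (d (s a)) → ℂ) (y : Fin (d (s (σa a))) → ℂ),
      B (Pi.single (t a) ((N a).mulVec x)) (Pi.single (s (σa a)) y) +
        B (Pi.single (s a) x) (Pi.single (t (σa a)) ((N (σa a)).mulVec y)) = 0 := by
    intro a x y
    have key : ∀ (c : ℂ), c ≠ 0 →
        (B (Pi.single (t a) ((N a).mulVec x)) (Pi.single (s (σa a)) y)
          + B (Pi.single (s a) x) (Pi.single (t (σa a)) ((N (σa a)).mulVec y)))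
        + c * (B (Pi.single (t a) ((M1 a).mulVec x)) (Pi.single (s (σa a)) y)
          + B (Pi.single (s a) x) (Pi.single (t (σa a)) ((M1 (σa a)).mulVec y)))
        + c ^ 2 * (B (Pi.single (t a) ((M2 a).mulVec x)) (Pi.single (s (σa a)) y)
          + B (Pi.single (s a) x) (Pi.single (t (σa a)) ((M2 (σa a)).mulVec y))) = 0 := by
      intro c hc
      have h := hconjRep c hc a x y
      rw [hconjM c hc a, hconjM c hc (σa a)] at h
      simp only [Matrix.add_mulVec, Matrix.smul_mulVec, hsingle_add, hsingle_smul,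
        map_add, map_smul, LinearMap.add_apply, LinearMap.smul_apply, smul_eq_mul] at h
      linear_combination h
    have e1 := key 1 one_ne_zero
    have e2 := key (-1) (by norm_num)
    have e3 := key 2 two_ne_zero
    linear_combination e1 + e2 / 3 - e3 / 3

  -- N agrees with X on U, preserves W mod U, preserves U'
  have hNapp : ∀ a x, (N a).mulVec x = nL a x := fun a x => hmv (nL a) x
  have hnLapp : ∀ a x, nL a x = pU (t a) (Xl a (pU (s a) x)) + pW (t a) (Xl a (pW (s a) x))
      + pU' (t a) (Xl a (pU' (s a) x)) := fun a x => rfl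
  have hNU : ∀ a, ∀ x ∈ U (s a), (N a).mulVec x = (X a).mulVec x := by
    intro a x hx
    rw [hNapp, hnLapp, hpU_id _ x hx, hpW_U _ x hx, hpU'_U _ x hx]
    simp only [map_zero, add_zero, zero_add]
    rw [hpU_id _ _ (hXU a x hx), hXl]
  have hNW : ∀ a, ∀ x ∈ W (s a), (N a).mulVec x ∈ W (t a)
      ∧ (X a).mulVec x - (N a).mulVec x ∈ U (t a) := by
    intro a x hx
    have h1 : (N a).mulVec x = pW (t a) (Xl a x) := by
      rw [hNapp, hnLapp, hpU_W _ x hx, hpW_id _ x hx, hpU'_W _ x hx]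
      simp only [map_zero, add_zero, zero_add]
    constructor
    · rw [h1]; exact hpW_mem _ _
    · have h2 : Xl a x ∈ Uperp (t a) := hXUperp a x (hWle _ hx)
      rw [← hWs (t a)] at h2
      obtain ⟨u, hu, w, hw, hsum⟩ := Submodule.mem_sup.mp h2
      rw [h1, ← hXl, ← hsum, map_add, hpW_U _ u hu, hpW_id _ w hw, zero_add]
      have h3 : u + w - w = u := by abel
      rw [h3]; exact hu
  have hNU' : ∀ a, ∀ x ∈ U' (s a), (N a).mulVec x ∈ U' (t a) := by
    intro a x hx
    have h1 : (N a).mulVec x = pU' (t a) (Xl a x) := by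
      rw [hNapp, hnLapp, hpU_U' _ x hx, hpW_U' _ x hx, hpU'_id _ x hx]
      simp only [map_zero, add_zero, zero_add]
    rw [h1]; exact hpU'_mem _ _
  -- U' pairs perfectly with U
  have hU'nd : ∀ i, ∀ x ∈ U' i,
      (∀ y ∈ U (σv i), B (Pi.single i x) (Pi.single (σv i) y) = 0) → x = 0 := by
    intro i x hx hy
    have hmem : x ∈ U i := by
      apply hdperp
      intro j z hz
      by_cases hj : j = σv i
      · subst hj
        rw [← hWs (σv i)] at hz
        obtain ⟨u, hu, w, hw, hsum⟩ := Submodule.mem_sup.mp hz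
        have h1 : bL i (σv i) x u = 0 := hy u hu
        have h2 : bL i (σv i) x w = 0 := hU'perpW i x hx (σv i) w hw
        rw [← hsum, hb_addr, h1, h2, add_zero]
      · exact hb0 i j hj x z
    have h3 : x ∈ Uperp i ⊓ U' i := ⟨hUU i hmem, hx⟩
    rw [hU'i i] at h3
    simpa using h3
  -- assembly
  refine ⟨W, U', lam, N, hWi, hUWinfU', hUWU', hWs, ?_, htend, hNrep, hNU, hNW, hNU', hU'nd⟩
  intro c hc x y
  have hx1 : (fun i => (↑(lam c i) : Matrix (Fin (d i)) (Fin (d i)) ℂ).mulVec (x i))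
      = fun i => L c i (x i) := by
    funext i; rw [hlam1 c hc i, hmv]
  have hy1 : (fun i => (↑(lam c i) : Matrix (Fin (d i)) (Fin (d i)) ℂ).mulVec (y i))
      = fun i => L c i (y i) := by
    funext i; rw [hlam1 c hc i, hmv]
  rw [hx1, hy1]
  exact hisoB c hc x y
end
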